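/- For every φ ∈ ℝ, the real 6×6 matrix M(φ) with rows (0, √2 cos φ, 0, 0, 0, 0), (√2 cos φ, 0, √2 cos φ, sin φ, 0, 0), (0, √2 cos φ, 0, 0, √2 sin φ, 0), (0, sin φ, 0, 0, cos φ, 0), (0, 0, √2 sin φ, cos φ, 0, √2 sin φ), (0, 0, 0, 0, √2 sin φ, 0) has characteristic polynomial X²(X² − 1)(X² − 4); in particular its eigenvalues are 0 (multiplicity 2), ±1, and ±2, independent of φ. -/

import Mathlib

open Polynomial Real

set_option maxRecDepth 8000

@[simp] lemma cons_val_five' {α : Type*} {m : ℕ} (x : α) (u : Fin (m+5) → α) :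
    Matrix.vecCons x u 5
      = Matrix.vecHead (Matrix.vecTail (Matrix.vecTail (Matrix.vecTail (Matrix.vecTail u)))) :=
  rfl

set_option maxHeartbeats 2000000 in
lemma detM6 (a b c d x : ℝ) :
    Matrix.det !![x,-a,0,0,0,0; -a,x,-a,-b,0,0; 0,-a,x,0,-c,0;
                  0,-b,0,x,-d,0; 0,0,-c,-d,x,-c; 0,0,0,0,-c,x]
    = x^6 - (2*a^2+b^2+2*c^2+d^2)*x^4
      + (2*b^2*c^2 - 2*a*b*c*d + 2*a^2*d^2 + 3*a^2*c^2)*x^2 := by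
  simp [Matrix.det_succ_row_zero, Fin.sum_univ_succ, Fin.succAbove]
  ring

lemma charmatrix_map_eval {n : Type*} [DecidableEq n] [Fintype n]
    (M : Matrix n n ℝ) (x : ℝ) :
    (Matrix.charmatrix M).map (Polynomial.eval x)
      = (algebraMap ℝ (Matrix n n ℝ)) x - M := by
  ext i j
  by_cases h : i = j <;>
    simp [h, Matrix.charmatrix_apply_eq, Matrix.charmatrix_apply_ne,
      Matrix.algebraMap_matrix_apply]

lemma eval_charpoly_det {n : Type*} [DecidableEq n] [Fintype n]
    (M : Matrix n n ℝ) (x : ℝ) :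
    (M.charpoly).eval x = ((algebraMap ℝ (Matrix n n ℝ)) x - M).det := by
  rw [Matrix.charpoly, ← Polynomial.coe_evalRingHom, RingHom.map_det,
    RingHom.mapMatrix_apply, Polynomial.coe_evalRingHom, charmatrix_map_eval]

noncomputable def M17 (φ : ℝ) : Matrix (Fin 6) (Fin 6) ℝ :=
  !![0, Real.sqrt 2 * cos φ, 0, 0, 0, 0;
     Real.sqrt 2 * cos φ, 0, Real.sqrt 2 * cos φ, sin φ, 0, 0;
     0, Real.sqrt 2 * cos φ, 0, 0, Real.sqrt 2 * sin φ, 0;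
     0, sin φ, 0, 0, cos φ, 0;
     0, 0, Real.sqrt 2 * sin φ, cos φ, 0, Real.sqrt 2 * sin φ;
     0, 0, 0, 0, Real.sqrt 2 * sin φ, 0]

lemma eval_charpoly_M17 (φ x : ℝ) :
    ((M17 φ).charpoly).eval x = x ^ 2 * (x ^ 2 - 1) * (x ^ 2 - 4) := by
  have h2 : Real.sqrt 2 * Real.sqrt 2 = 2 := Real.mul_self_sqrt (by norm_num)
  have hcs : cos φ ^ 2 + sin φ ^ 2 = 1 := by rw [add_comm]; exact sin_sq_add_cos_sq φ
  rw [eval_charpoly_det]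
  have hm : (algebraMap ℝ (Matrix (Fin 6) (Fin 6) ℝ)) x - M17 φ =
      !![x, -(Real.sqrt 2 * cos φ), 0, 0, 0, 0;
         -(Real.sqrt 2 * cos φ), x, -(Real.sqrt 2 * cos φ), -sin φ, 0, 0;
         0, -(Real.sqrt 2 * cos φ), x, 0, -(Real.sqrt 2 * sin φ), 0;
         0, -sin φ, 0, x, -cos φ, 0;
         0, 0, -(Real.sqrt 2 * sin φ), -cos φ, x, -(Real.sqrt 2 * sin φ);
         0, 0, 0, 0, -(Real.sqrt 2 * sin φ), x] := by
    ext i j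
    fin_cases i <;> fin_cases j <;>
      simp [M17, Matrix.algebraMap_matrix_apply, Matrix.cons_val_succ,
        Matrix.vecHead, Matrix.vecTail]
  rw [hm, detM6]
  linear_combination (-(x^4*(2*cos φ^2 + 2*sin φ^2))
      + x^2*(2*sin φ^4 - 2*sin φ^2*cos φ^2 + 2*cos φ^4)
      + 3*sin φ^2*cos φ^2*x^2*(Real.sqrt 2*Real.sqrt 2 + 2)) * h2
    + (-5*x^4 + 4*x^2*(sin φ^2 + cos φ^2 + 1)) * hcs

theorem stmt17 (φ : ℝ) :
    (M17 φ).charpoly = X ^ 2 * (X ^ 2 - 1) * (X ^ 2 - 4) ∧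
    spectrum ℝ (M17 φ) = ({0, 1, -1, 2, -2} : Set ℝ) := by
  have hcp : (M17 φ).charpoly = X ^ 2 * (X ^ 2 - 1) * (X ^ 2 - 4) := by
    apply Polynomial.funext
    intro x
    rw [eval_charpoly_M17]
    simp
  refine ⟨hcp, ?_⟩
  ext x
  have hmem : x ∈ spectrum ℝ (M17 φ) ↔ ((M17 φ).charpoly).eval x = 0 := by
    rw [spectrum.mem_iff, Matrix.isUnit_iff_isUnit_det, isUnit_iff_ne_zero, not_ne_iff,
      eval_charpoly_det]
  rw [hmem, eval_charpoly_M17]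
  constructor
  · intro h
    have h' : x * x * ((x - 1) * (x + 1)) * ((x - 2) * (x + 2)) = 0 := by linear_combination h
    simp only [mul_eq_zero, sub_eq_zero, add_eq_zero_iff_eq_neg] at h'
    simp only [Set.mem_insert_iff, Set.mem_singleton_iff]
    rcases h' with ((h|h)|h|h)|h|h <;> subst h <;> norm_num
  · intro h
    simp only [Set.mem_insert_iff, Set.mem_singleton_iff] at h
    rcases h with h|h|h|h|h <;> subst h <;> ring
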